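/- arXiv:1810.07556 — 11 statements merged into one kernel-verified Lean document; each statement's English description precedes it below -/
import Mathlib

section
/- Let Y ⊆ ℝ^m be a closed subset for the Euclidean topology and let f = (f₁, …, f_n) : ℝ^m → ℝ^n be a map whose components are polynomials. Assume that for every j ∈ {1, …, m} the coordinate function Y → ℝ, y ↦ y_j, is integral over the ℝ-subalgebra of the ring of all real-valued functions on Y generated by the restrictions f₁|_Y, …, f_n|_Y. Then the restriction f|_Y : Y → ℝ^n is a proper map, i.e. the preimage under f|_Y of every compact subset of ℝ^n is compact; in particular f|_Y is a closed map for the Euclidean topology. -/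
/-- Cauchy-type bound for real roots of a monic polynomial. -/
lemma monic_root_abs_le (p : Polynomial ℝ) (hp : p.Monic) (x : ℝ) (hx : p.eval x = 0) :
    |x| ≤ 1 + ∑ k ∈ Finset.range p.natDegree, |p.coeff k| := by
  have hsum : (0:ℝ) ≤ ∑ k ∈ Finset.range p.natDegree, |p.coeff k| :=
    Finset.sum_nonneg fun k _ => abs_nonneg _
  rcases le_or_gt |x| 1 with h1 | h1
  · linarith
  · have hd : p.natDegree ≠ 0 := by
      intro h
      have := Polynomial.eq_one_of_monic_natDegree_zero hp h
      rw [this] at hx; simp at hx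
    set d := p.natDegree with hdd
    have heval : p.eval x = x ^ d + ∑ k ∈ Finset.range d, p.coeff k * x ^ k := by
      rw [Polynomial.eval_eq_sum_range, Finset.sum_range_succ, hp.coeff_natDegree, one_mul,
        add_comm]
    have hxd : x ^ d = -∑ k ∈ Finset.range d, p.coeff k * x ^ k := by
      rw [heval] at hx; linarith
    have hb : |x| ^ d ≤ (∑ k ∈ Finset.range d, |p.coeff k|) * |x| ^ (d - 1) := by
      calc |x| ^ d = |x ^ d| := (abs_pow x d).symm
        _ = |∑ k ∈ Finset.range d, p.coeff k * x ^ k| := by rw [hxd, abs_neg]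
        _ ≤ ∑ k ∈ Finset.range d, |p.coeff k * x ^ k| := Finset.abs_sum_le_sum_abs _ _
        _ ≤ ∑ k ∈ Finset.range d, |p.coeff k| * |x| ^ (d - 1) := by
            apply Finset.sum_le_sum
            intro k hk
            rw [abs_mul, abs_pow]
            apply mul_le_mul_of_nonneg_left _ (abs_nonneg _)
            have hk' := Finset.mem_range.1 hk
            exact pow_le_pow_right₀ h1.le (by omega)
        _ = (∑ k ∈ Finset.range d, |p.coeff k|) * |x| ^ (d - 1) := by
            rw [Finset.sum_mul]
    have hpow : |x| ^ d = |x| * |x| ^ (d - 1) := by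
      rw [← pow_succ']
      congr 1
      omega
    have hpos : (0:ℝ) < |x| ^ (d - 1) := pow_pos (by linarith) _
    rw [hpow] at hb
    have := le_of_mul_le_mul_right hb hpos
    linarith

/-- Let `Y ⊆ ℝ^m` be a Euclidean-closed subset and
`F : ℝ^m → ℝ^n` a polynomial map (components given by `P j : MvPolynomial (Fin m) ℝ`).
If every coordinate function `y ↦ y j` of `Y` is integral over the `ℝ`-subalgebra of the
ring of all real-valued functions on `Y` generated by the restrictions to `Y` of the
components of `F`, then the restriction `F|_Y : Y → ℝⁿ` is proper (preimages of compact
sets are compact) and, in particular, it is a closed map for the Euclidean topology. -/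
theorem finite_polynomial_map_isProper_isClosed {m n : ℕ}
    (Y : Set (Fin m → ℝ)) (hY : IsClosed Y)
    (P : Fin n → MvPolynomial (Fin m) ℝ)
    (hint : ∀ j : Fin m,
      ((Algebra.adjoin ℝ
          (Set.range fun i : Fin n => fun y : Y => MvPolynomial.eval (y : Fin m → ℝ) (P i))
        : Subalgebra ℝ (Y → ℝ)).toSubring.subtype).IsIntegralElem
        (fun y : Y => (y : Fin m → ℝ) j)) :
    (∀ K : Set (Fin n → ℝ), IsCompact K →
      IsCompact ((fun y : Y => fun i : Fin n => MvPolynomial.eval (y : Fin m → ℝ) (P i)) ⁻¹' K)) ∧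
    IsClosedMap (fun y : Y => fun i : Fin n => MvPolynomial.eval (y : Fin m → ℝ) (P i)) := by
  set g : Fin n → (Y → ℝ) := fun i : Fin n => fun y : Y => MvPolynomial.eval (y : Fin m → ℝ) (P i)
    with hg
  set A := (Algebra.adjoin ℝ (Set.range g) : Subalgebra ℝ (Y → ℝ)) with hA
  set f : Y → (Fin n → ℝ) := fun y : Y => fun i : Fin n => MvPolynomial.eval (y : Fin m → ℝ) (P i)
    with hf
  set F : (Fin m → ℝ) → (Fin n → ℝ) := fun x => fun i : Fin n => MvPolynomial.eval x (P i)
    with hF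
  have hFcont : Continuous F := continuous_pi fun i => MvPolynomial.continuous_eval _
  have hfcont : Continuous f := by
    have : f = F ∘ (fun y : Y => (y : Fin m → ℝ)) := rfl
    rw [this]
    exact hFcont.comp continuous_subtype_val
  have hcompact : ∀ K : Set (Fin n → ℝ), IsCompact K → IsCompact (f ⁻¹' K) := by
    intro K hK
    -- coordinate bounds
    have hbound : ∀ j : Fin m, ∃ B : ℝ, ∀ y : Y, f y ∈ K → |(y : Fin m → ℝ) j| ≤ B := by
      intro j
      obtain ⟨p, hpmonic, hp0⟩ := hint j
      -- each coefficient of p is a polynomial in g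
      have hcoeff : ∀ k : ℕ, ∃ Q : MvPolynomial (Fin n) ℝ,
          MvPolynomial.aeval g Q = ((p.coeff k : A.toSubring) : Y → ℝ) := by
        intro k
        have hmem : ((p.coeff k : A.toSubring) : Y → ℝ) ∈ A := (p.coeff k).2
        have hmem' : ((p.coeff k : A.toSubring) : Y → ℝ) ∈ (MvPolynomial.aeval (R := ℝ) g).range := by
          rw [← Algebra.adjoin_range_eq_range_aeval]
          exact hmem
        exact hmem'
      choose Q hQ using hcoeff
      -- bounds for the Q's on K
      have hM : ∀ k : ℕ, ∃ M : ℝ, ∀ v ∈ K, |MvPolynomial.eval v (Q k)| ≤ M := by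
        intro k
        obtain ⟨M, hM⟩ := hK.exists_bound_of_continuousOn
          ((MvPolynomial.continuous_eval (Q k)).continuousOn)
        exact ⟨M, fun v hv => hM v hv⟩
      choose M hMle using hM
      refine ⟨1 + ∑ k ∈ Finset.range p.natDegree, M k, ?_⟩
      intro y hy
      -- evaluate the integral equation at y
      set ψ : A.toSubring →+* ℝ := (Pi.evalRingHom (fun _ : Y => ℝ) y).comp A.toSubring.subtype
        with hψ
      have h1 : (Pi.evalRingHom (fun _ : Y => ℝ) y)
          (Polynomial.eval₂ A.toSubring.subtype (fun y : Y => (y : Fin m → ℝ) j) p) = 0 := by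
        rw [hp0]; exact map_zero _
      rw [Polynomial.hom_eval₂] at h1
      have h0 : (p.map ψ).eval ((y : Fin m → ℝ) j) = 0 := by
        rw [Polynomial.eval_map]; exact h1
      have hmonic' : (p.map ψ).Monic := hpmonic.map ψ
      have hdeg : (p.map ψ).natDegree = p.natDegree := hpmonic.natDegree_map ψ
      have hb := monic_root_abs_le (p.map ψ) hmonic' _ h0
      rw [hdeg] at hb
      refine hb.trans ?_
      have hsumle : ∑ k ∈ Finset.range p.natDegree, |(p.map ψ).coeff k|
          ≤ ∑ k ∈ Finset.range p.natDegree, M k := by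
        apply Finset.sum_le_sum
        intro k _
        have hcoeffval : (p.map ψ).coeff k = MvPolynomial.eval (f y) (Q k) := by
          rw [Polynomial.coeff_map]
          have h1' : ψ (p.coeff k) = ((p.coeff k : A.toSubring) : Y → ℝ) y := rfl
          rw [h1', ← hQ k]
          have h3 := congrArg (fun φ : MvPolynomial (Fin n) ℝ →ₐ[ℝ] ℝ => φ (Q k))
            (MvPolynomial.comp_aeval (φ := Pi.evalAlgHom ℝ (fun _ : Y => ℝ) y) (f := g))
          have h4 : (MvPolynomial.aeval g (Q k)) y
              = MvPolynomial.aeval (fun i => g i y) (Q k) := h3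
          rw [h4]
          have h5 : MvPolynomial.aeval (fun i => g i y) (Q k)
              = MvPolynomial.eval (fun i => g i y) (Q k) := by
            rw [MvPolynomial.aeval_def, Algebra.algebraMap_self]
            rfl
          rw [h5]
        rw [hcoeffval]
        exact hMle k (f y) hy
      linarith
    choose B hB using hbound
    rw [Subtype.isCompact_iff]
    have himg : ((↑) '' (f ⁻¹' K) : Set (Fin m → ℝ)) = Y ∩ F ⁻¹' K := by
      ext x
      constructor
      · rintro ⟨y, hy, rfl⟩
        exact ⟨y.2, hy⟩
      · rintro ⟨hxY, hxK⟩
        exact ⟨⟨x, hxY⟩, hxK, rfl⟩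
    rw [himg]
    have hclosed : IsClosed (Y ∩ F ⁻¹' K) := hY.inter (hK.isClosed.preimage hFcont)
    refine IsCompact.of_isClosed_subset
      (isCompact_univ_pi fun j => isCompact_Icc (a := -(B j)) (b := B j)) hclosed ?_
    rintro x ⟨hxY, hxK⟩
    intro j _
    exact abs_le.1 (hB j ⟨x, hxY⟩ hxK)
  refine ⟨hcompact, ?_⟩
  have hproper : IsProperMap f := isProperMap_iff_isCompact_preimage.2
    ⟨hfcont, fun K hK => hcompact K hK⟩
  exact hproper.isClosedMap
end

section
/- Let A be a commutative ring and let m be a maximal ideal of A. Then m is a real ideal if and only if m contains no element of the form 1 + s, where s is a sum of squares of elements of A. -/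
/-- An ideal `I` of a commutative ring is *real* if whenever a sum of squares
`a 0 ^ 2 + ⋯ + a (n-1) ^ 2` belongs to `I`, each `a i` belongs to `I`. -/
def IsRealIdeal {A : Type*} [CommRing A] (I : Ideal A) : Prop :=
  ∀ (n : ℕ) (a : Fin n → A), (∑ i, a i ^ 2) ∈ I → ∀ i, a i ∈ I

private lemma isSumSq_exists_fin {A : Type*} [CommRing A] {s : A} (hs : IsSumSq s) :
    ∃ (n : ℕ) (f : Fin n → A), s = ∑ i, f i ^ 2 := by
  induction hs with
  | zero => exact ⟨0, ![], by simp⟩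
  | sq_add a pS ih =>
    obtain ⟨n, f, hf⟩ := ih
    exact ⟨n + 1, Fin.cons a f, by simp [Fin.sum_univ_succ, hf, sq]⟩

/-- A maximal ideal `m` of a commutative ring `A` is a real ideal if and
only if `m` contains no element of the form `1 + s` with `s` a sum of squares in `A`. -/
theorem isRealIdeal_maximal_iff {A : Type*} [CommRing A] (m : Ideal A) (hm : m.IsMaximal) :
    IsRealIdeal m ↔ ∀ s : A, IsSumSq s → 1 + s ∉ m := by
  constructor
  · intro hreal s hs h1s
    obtain ⟨n, f, rfl⟩ := isSumSq_exists_fin hs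
    have : (∑ i : Fin (n + 1), (Fin.cons 1 f : Fin (n+1) → A) i ^ 2) ∈ m := by
      simpa [Fin.sum_univ_succ] using h1s
    have h1 : (1 : A) ∈ m := by simpa using hreal (n + 1) (Fin.cons 1 f) this 0
    exact hm.ne_top (Ideal.eq_top_of_isUnit_mem m h1 isUnit_one)
  · intro h n a hsum j
    by_contra hj
    obtain ⟨r, x, hx, hrx⟩ := hm.exists_inv hj
    -- 1 - (r * a j)^2 ∈ m
    have key : 1 - (r * a j) ^ 2 ∈ m := by
      have : 1 - (r * a j) ^ 2 = x * (2 - x) := by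
        have : r * a j = 1 - x := by linear_combination hrx
        rw [this]; ring
      rw [this]
      exact m.mul_mem_right _ hx
    set s : A := ∑ i ∈ Finset.univ.erase j, (r * a i) ^ 2 with hs_def
    have hssq : IsSumSq s := by
      have := IsSumSq.sum_mul_self (Finset.univ.erase j) (fun i => r * a i)
      simpa only [hs_def, sq] using this
    apply h s hssq
    have hsum' : (∑ i, (r * a i) ^ 2) ∈ m := by
      have : (∑ i, (r * a i) ^ 2) = r ^ 2 * ∑ i, a i ^ 2 := by
        rw [Finset.mul_sum]; congr 1; ext i; ring
      rw [this]
      exact m.mul_mem_left _ hsum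
    have hsplit : (∑ i, (r * a i) ^ 2) = (r * a j) ^ 2 + s := by
      rw [hs_def]; exact (Finset.add_sum_erase _ _ (Finset.mem_univ j)).symm
    have : 1 + s = (1 - (r * a j) ^ 2) + ∑ i, (r * a i) ^ 2 := by
      rw [hsplit]; ring
    rw [this]
    exact m.add_mem key hsum'
end

section
/- Let A be a commutative ring and let O(A) = (1+ΣA²)⁻¹A be the localization of A at the multiplicative subset of elements of the form 1 plus a sum of squares of elements of A. Then every maximal ideal of O(A) is a real ideal. -/
theorem isSumSq_sq_mul {R : Type*} [CommRing R] (a : R) {t : R} (ht : IsSumSq t) :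
    IsSumSq (a * a * t) := by
  induction ht with
  | zero => simpa using IsSumSq.zero
  | @sq_add b T pT ih =>
    have h2 : a * a * (b * b + T) = (a * b) * (a * b) + a * a * T := by ring
    rw [h2]
    exact IsSumSq.sq_add _ ih

theorem isSumSq_mul {R : Type*} [CommRing R] {s t : R} (hs : IsSumSq s) (ht : IsSumSq t) :
    IsSumSq (s * t) := by
  induction hs with
  | zero => simpa using IsSumSq.zero
  | @sq_add a S pS ih =>
    have h : (a * a + S) * t = (a * a) * t + S * t := by ring
    rw [h]
    exact (isSumSq_sq_mul a ht).add ih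

/-- The multiplicative subset `1 + ΣA²` of elements of the form `1` plus a sum of squares. -/
def oneAddSumSq (A : Type*) [CommRing A] : Submonoid A where
  carrier := {x | ∃ s, IsSumSq s ∧ x = 1 + s}
  one_mem' := ⟨0, IsSumSq.zero, by ring⟩
  mul_mem' := by
    rintro x y ⟨s, hs, rfl⟩ ⟨t, ht, rfl⟩
    exact ⟨s + t + s * t, (hs.add ht).add (isSumSq_mul hs ht), by ring⟩

theorem isSumSq_finset_sum {R : Type*} [CommRing R] {ι : Type*} (s : Finset ι) (f : ι → R) :
    IsSumSq (∑ i ∈ s, f i ^ 2) := by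
  classical
  induction s using Finset.cons_induction with
  | empty => simpa using IsSumSq.zero
  | cons i s hi ih =>
    rw [Finset.sum_cons, pow_two]
    exact IsSumSq.sq_add _ ih

/-- Every sum of squares in the localization is of the form `t / d` with `t` a sum of
squares in `A` and `d` in the multiplicative set. -/
theorem exists_rep_of_isSumSq {A : Type*} [CommRing A]
    {σ : Localization (oneAddSumSq A)} (h : IsSumSq σ) :
    ∃ (t : A) (d : oneAddSumSq A), IsSumSq t ∧ σ = Localization.mk t d := by
  induction h with
  | zero => exact ⟨0, 1, IsSumSq.zero, (Localization.mk_zero 1).symm⟩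
  | @sq_add a S pS ih =>
    obtain ⟨t, d, ht, rfl⟩ := ih
    obtain ⟨x, u, hxu⟩ : ∃ (x : A) (u : oneAddSumSq A), Localization.mk x u = a :=
      Localization.induction_on a fun y => ⟨y.1, y.2, rfl⟩
    subst hxu
    refine ⟨↑(u * u) * t + ↑d * (x * x), u * u * d, ?_, ?_⟩
    · refine IsSumSq.add ?_ ?_
      · have : ↑(u * u) * t = (↑u : A) * ↑u * t := by push_cast; ring
        rw [this]; exact isSumSq_sq_mul _ ht
      · obtain ⟨s, hs, hd⟩ := d.2
        have : (↑d : A) * (x * x) = x * x + x * x * s := by rw [hd]; ring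
        rw [this]
        exact IsSumSq.sq_add _ (isSumSq_sq_mul x hs)
    · rw [Localization.mk_mul, Localization.add_mk]

theorem isUnit_one_add_isSumSq {A : Type*} [CommRing A]
    {σ : Localization (oneAddSumSq A)} (h : IsSumSq σ) : IsUnit (1 + σ) := by
  obtain ⟨t, d, ht, rfl⟩ := exists_rep_of_isSumSq h
  obtain ⟨s, hs, hd⟩ := d.2
  have hnum : (↑d : A) + t ∈ oneAddSumSq A := ⟨s + t, hs.add ht, by rw [hd]; ring⟩
  have h1 : (1 : Localization (oneAddSumSq A)) + Localization.mk t d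
      = Localization.mk ((↑d : A) + t) d := by
    rw [← Localization.mk_one, Localization.add_mk]
    congr 1
    · push_cast; ring
    · rw [one_mul]
  rw [h1]
  refine IsUnit.of_mul_eq_one (Localization.mk (↑d : A) ⟨_, hnum⟩) ?_
  rw [Localization.mk_mul]
  have : ((↑d : A) + t) * ↑d = ↑(d * (⟨_, hnum⟩ : oneAddSumSq A)) := by push_cast; ring
  rw [this, Localization.mk_self]

/-- Every maximal ideal of the localization `O(A) = (1+ΣA²)⁻¹A` is a
real ideal. -/
theorem isRealIdeal_of_isMaximal_ringOfRegular {A : Type*} [CommRing A]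
    (M : Ideal (Localization (oneAddSumSq A))) (hM : M.IsMaximal) :
    IsRealIdeal M := by
  intro n a hq i
  by_contra hai
  obtain ⟨b, m, hm, h1⟩ := hM.exists_inv hai
  set S : Localization (oneAddSumSq A) := ∑ j ∈ Finset.univ.erase i, (b * a j) ^ 2 with hS
  have he : m * (2 - m) + b ^ 2 * (∑ j, a j ^ 2) ∈ M :=
    M.add_mem (M.mul_mem_right _ hm) (M.mul_mem_left _ hq)
  have hsum : (b * a i) ^ 2 + S = ∑ j, (b * a j) ^ 2 :=
    Finset.add_sum_erase _ (fun j => (b * a j) ^ 2) (Finset.mem_univ i)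
  have hbq : b ^ 2 * (∑ j, a j ^ 2) = ∑ j, (b * a j) ^ 2 := by
    rw [Finset.mul_sum]
    exact Finset.sum_congr rfl fun j _ => by ring
  have key : m * (2 - m) + b ^ 2 * (∑ j, a j ^ 2) = 1 + S := by
    rw [hbq, ← hsum]
    have hm1 : m = 1 - b * a i := by linear_combination h1
    rw [hm1]; ring
  rw [key] at he
  exact hM.ne_top (M.eq_top_of_isUnit_mem he (isUnit_one_add_isSumSq (isSumSq_finset_sum _ _)))
end

section
/- Let A be a commutative ring and p a real prime ideal of A. Then p is disjoint from 1+ΣA², the extension p·O(A) of p in the localization O(A) = (1+ΣA²)⁻¹A is a prime ideal, and the canonical ring homomorphism A_p → O(A)_{p·O(A)} between the localization of A at p and the localization of O(A) at p·O(A) is an isomorphism. -/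
/-- Let `p` be a real prime ideal of `A`. Then `p` is disjoint from
`1+ΣA²`, the extension `p·O(A)` in `O(A) = (1+ΣA²)⁻¹A` is prime, and the canonical map
`A_p → O(A)_{p·O(A)}` between the localizations is an isomorphism (bijective). -/
theorem localization_at_real_prime {A : Type*} [CommRing A]
    (p : Ideal A) [hp : p.IsPrime] (hreal : IsRealIdeal p) :
    (∀ s : A, IsSumSq s → 1 + s ∉ p) ∧
    (p.map (algebraMap A (Localization (oneAddSumSq A)))).IsPrime ∧
    ∀ (hP : (p.map (algebraMap A (Localization (oneAddSumSq A)))).IsPrime)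
      (hc : p = (p.map (algebraMap A (Localization (oneAddSumSq A)))).comap
        (algebraMap A (Localization (oneAddSumSq A)))),
      Function.Bijective
        (@Localization.localRingHom A _ (Localization (oneAddSumSq A)) _ p hp
          (p.map (algebraMap A (Localization (oneAddSumSq A)))) hP
          (algebraMap A (Localization (oneAddSumSq A))) hc) := by
  have hdisj : ∀ s : A, IsSumSq s → 1 + s ∉ p := by
    intro s hs hmem
    have hrep : ∀ t : A, IsSumSq t → ∃ (n : ℕ) (a : Fin n → A), t = ∑ i, a i ^ 2 := by
      intro t ht
      induction ht with
      | zero => exact ⟨0, ![], by simp⟩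
      | @sq_add b T _ ih =>
        obtain ⟨n, a, rfl⟩ := ih
        exact ⟨n + 1, Fin.cons b a, by
          rw [Fin.sum_univ_succ, Fin.cons_zero]
          simp [Fin.cons_succ, sq]⟩
    obtain ⟨n, a, rfl⟩ := hrep s hs
    have h1 : (∑ i, (Fin.cons 1 a : Fin (n+1) → A) i ^ 2) ∈ p := by
      rw [Fin.sum_univ_succ, Fin.cons_zero]
      simpa [Fin.cons_succ] using hmem
    have := hreal (n + 1) (Fin.cons 1 a) h1 0
    simp only [Fin.cons_zero] at this
    exact hp.ne_top (p.eq_top_iff_one.mpr this)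
  have hdisj' : Disjoint ((oneAddSumSq A : Submonoid A) : Set A) (p : Set A) := by
    rw [Set.disjoint_left]
    rintro x ⟨s, hs, rfl⟩ hx
    exact hdisj s hs hx
  refine ⟨hdisj, IsLocalization.isPrime_of_isPrime_disjoint (oneAddSumSq A) _ p hp hdisj',
    fun hP hc => ?_⟩
  set M := oneAddSumSq A
  set q := p.map (algebraMap A (Localization M)) with hq
  letI : IsLocalization p.primeCompl (Localization.AtPrime q) := by
    have hpc : p.primeCompl = (Ideal.comap (algebraMap A (Localization M)) q).primeCompl :=
      Submonoid.ext fun x => not_congr (SetLike.ext_iff.mp hc x)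
    rw [hpc]
    exact IsLocalization.isLocalization_atPrime_localization_atPrime (M := M) (p := q)
  let e : Localization.AtPrime p ≃ₐ[A] Localization.AtPrime q :=
    IsLocalization.algEquiv p.primeCompl _ _
  have key : Localization.localRingHom p q (algebraMap A (Localization M)) hc
      = (e : Localization.AtPrime p →+* Localization.AtPrime q) :=
    Localization.localRingHom_unique _ _ _ _ (fun x => by
      have : (algebraMap A (Localization.AtPrime q)) x
          = (algebraMap (Localization M) (Localization.AtPrime q))
            (algebraMap A (Localization M) x) :=
        (IsScalarTower.algebraMap_apply A (Localization M) (Localization.AtPrime q) x)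
      rw [← this]
      exact e.commutes x)
  rw [key]
  exact e.bijective
end

section
/- Let A be a reduced commutative ring with finitely many minimal prime ideals, all of which are real ideals (condition (MP)). Let K be the total ring of fractions of A, let A' be the integral closure of A in K, and let B be a ring with A ⊆ B ⊆ A'. Then B is reduced and has finitely many minimal prime ideals, all of which are real ideals, and the map q ↦ q ∩ A is a bijection from the set of minimal prime ideals of B onto the set of minimal prime ideals of A. -/
lemma IsRealIdeal.comap {R S : Type*} [CommRing R] [CommRing S] (f : R →+* S) {I : Ideal S}
    (hI : IsRealIdeal I) : IsRealIdeal (I.comap f) := by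
  intro n a ha i
  rw [Ideal.mem_comap]
  apply hI n (fun i => f (a i)) _ i
  rw [Ideal.mem_comap, map_sum] at ha
  simpa [map_pow] using ha

/-- In a reduced ring, minimal primes are disjoint from the nonzerodivisors. -/
lemma minimalPrimes_disjoint_nonZeroDivisors {R : Type*} [CommRing R] [IsReduced R] {p : Ideal R}
    (hp : p ∈ minimalPrimes R) :
    Disjoint ((nonZeroDivisors R : Submonoid R) : Set R) (p : Set R) := by
  haveI : p.IsPrime := hp.1.1
  rw [Set.disjoint_left]
  intro x hx hxp
  have hnil : IsNilpotent (algebraMap R (Localization.AtPrime p) x) := by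
    have hr := IsLocalization.AtPrime.radical_map_of_mem_minimalPrimes (Localization.AtPrime p) p ⊥ hp
    rw [Ideal.map_bot, IsLocalization.AtPrime.map_eq_maximalIdeal p (Localization.AtPrime p)] at hr
    rw [← mem_nilradical, nilradical, Ideal.zero_eq_bot, hr]
    exact (IsLocalization.AtPrime.to_map_mem_maximal_iff _ p x).mpr hxp
  obtain ⟨n, hn⟩ := hnil
  rw [← map_pow, ← map_zero (algebraMap R (Localization.AtPrime p))] at hn
  obtain ⟨c, hc⟩ := (IsLocalization.eq_iff_exists p.primeCompl _).mp hn
  rw [mul_zero] at hc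
  have hc0 : (c : R) = 0 := (mem_nonZeroDivisors_iff_right.mp (pow_mem hx n)) c hc
  exact c.2 (hc0 ▸ p.zero_mem)

/-- Minimal primes of a localization biject (via contraction) with minimal primes of the base,
provided all minimal primes of the base are disjoint from the submonoid. -/
lemma bijOn_minimalPrimes_of_isLocalization {R S : Type*} [CommRing R] [CommRing S] [Algebra R S]
    (M : Submonoid R) [IsLocalization M S]
    (h : ∀ p ∈ minimalPrimes R, Disjoint (M : Set R) (p : Set R)) :
    Set.BijOn (fun q : Ideal S => q.comap (algebraMap R S)) (minimalPrimes S) (minimalPrimes R) := by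
  have hmS : ∀ q : Ideal S, q ∈ minimalPrimes S ↔ Minimal Ideal.IsPrime q := fun q => by
    rw [minimalPrimes_eq_minimals]; exact Iff.rfl
  have hmR : ∀ p : Ideal R, p ∈ minimalPrimes R ↔ Minimal Ideal.IsPrime p := fun p => by
    rw [minimalPrimes_eq_minimals]; exact Iff.rfl
  refine ⟨?_, ?_, ?_⟩
  · -- MapsTo
    intro Q hQ
    replace hQ := (hmS Q).mp hQ
    haveI := hQ.1
    have hc := (IsLocalization.isPrime_iff_isPrime_disjoint M S Q).mp hQ.1
    rw [hmR]
    refine ⟨hc.1, fun p hp hle => ?_⟩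
    haveI := hp
    obtain ⟨p0, hp0, hp0le⟩ := Ideal.exists_minimalPrimes_le (bot_le : (⊥ : Ideal R) ≤ p)
    have hp0' : p0 ∈ minimalPrimes R := hp0
    have hp0m := (hmR p0).mp hp0'
    have hdisj := h p0 hp0'
    have hprime0 : (Ideal.map (algebraMap R S) p0).IsPrime :=
      IsLocalization.isPrime_of_isPrime_disjoint M S p0 hp0m.1 hdisj
    have hmaple : Ideal.map (algebraMap R S) p0 ≤ Q := by
      rw [← IsLocalization.map_comap M S Q]
      exact Ideal.map_mono (hp0le.trans hle)
    have hQeq : Q = Ideal.map (algebraMap R S) p0 := (hQ.eq_of_le hprime0 hmaple).symm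
    calc Q.comap (algebraMap R S)
        = p0 := by
          rw [hQeq]; exact IsLocalization.comap_map_of_isPrime_disjoint M S hp0m.1 hdisj
      _ ≤ p := hp0le
  · -- InjOn
    intro Q1 h1 Q2 h2 he
    have := congrArg (Ideal.map (algebraMap R S)) he
    rwa [IsLocalization.map_comap M S Q1, IsLocalization.map_comap M S Q2] at this
  · -- SurjOn
    intro p hp
    have hpm := (hmR p).mp hp
    have hdisj := h p hp
    have hprime : (Ideal.map (algebraMap R S) p).IsPrime :=
      IsLocalization.isPrime_of_isPrime_disjoint M S p hpm.1 hdisj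
    have hcomap : (Ideal.map (algebraMap R S) p).comap (algebraMap R S) = p :=
      IsLocalization.comap_map_of_isPrime_disjoint M S hpm.1 hdisj
    refine ⟨Ideal.map (algebraMap R S) p, (hmS _).mpr ⟨hprime, fun Q' hQ' hle => ?_⟩, hcomap⟩
    haveI := hQ'
    have hc' := (IsLocalization.isPrime_iff_isPrime_disjoint M S Q').mp hQ'
    have h1 : Q'.comap (algebraMap R S) ≤ p := hcomap ▸ Ideal.comap_mono hle
    have h2 : p = Q'.comap (algebraMap R S) := (hpm.eq_of_le hc'.1 h1).symm
    rw [← IsLocalization.map_comap M S Q']; exact (congrArg (Ideal.map (algebraMap R S)) h2).le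

/-- A prime of a localization is real if its contraction is real. -/
lemma isRealIdeal_of_isLocalization {R S : Type*} [CommRing R] [CommRing S] [Algebra R S]
    (M : Submonoid R) [IsLocalization M S] {Q : Ideal S}
    (hreal : IsRealIdeal (Q.comap (algebraMap R S))) : IsRealIdeal Q := by
  intro n a ha i
  obtain ⟨s, hs⟩ := IsLocalization.exist_integer_multiples_of_finite M a
  choose b hb using hs
  have key : (∑ j, b j ^ 2) ∈ Q.comap (algebraMap R S) := by
    rw [Ideal.mem_comap, map_sum]
    have hc : ∀ j, algebraMap R S (b j ^ 2) =
        (algebraMap R S (s : R)) ^ 2 * a j ^ 2 := by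
      intro j
      rw [map_pow, hb j, Algebra.smul_def]
      ring
    rw [Finset.sum_congr rfl fun j _ => hc j, ← Finset.mul_sum]
    exact Q.mul_mem_left _ ha
  have hbQ : algebraMap R S (b i) ∈ Q := hreal n b key i
  rw [hb i, Algebra.smul_def] at hbQ
  obtain ⟨u, hu⟩ := IsLocalization.map_units S s
  have heq : a i = ↑u⁻¹ * (↑u * a i) := by rw [← mul_assoc, Units.inv_mul, one_mul]
  rw [hu] at heq
  exact heq ▸ Q.mul_mem_left _ hbQ

/-- Let `A` satisfy condition (MP): `A` is reduced with finitely many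
minimal primes, all real. Let `K` be the total ring of fractions of `A`, `A'` the integral
closure of `A` in `K`, and `B` an intermediate ring `A ⊆ B ⊆ A'`. Then `B` also satisfies
(MP) — `B` is reduced, has finitely many minimal primes, all of them real — and contraction
`q ↦ q ∩ A` is a bijection from the minimal primes of `B` onto the minimal primes of `A`. -/
theorem mp_of_intermediate_integral_extension {A : Type*} [CommRing A] [IsReduced A]
    (hfin : (minimalPrimes A).Finite)
    (hreal : ∀ p ∈ minimalPrimes A, IsRealIdeal p)
    (B : Subalgebra A (FractionRing A))
    (hB : B ≤ integralClosure A (FractionRing A)) :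
    IsReduced B ∧ (minimalPrimes B).Finite ∧
    (∀ q ∈ minimalPrimes (↥B), IsRealIdeal q) ∧
    Set.BijOn (fun q : Ideal B => q.comap (algebraMap A B))
      (minimalPrimes (↥B)) (minimalPrimes A) := by
  classical
  set K := FractionRing A with hK
  haveI : IsReduced K := isReduced_localizationPreserves (nonZeroDivisors A) _ inferInstance
  have hinjB : Function.Injective (algebraMap ↥B K) := by
    rw [Subalgebra.algebraMap_eq]
    exact Subtype.val_injective.comp fun x y h => h
  haveI hRedB : IsReduced ↥B := isReduced_of_injective (algebraMap ↥B K) hinjB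
  set M' : Submonoid ↥B := (nonZeroDivisors A).map (algebraMap A ↥B) with hM'
  haveI : IsLocalization M' K := by
    refine ⟨?_, ?_, ?_⟩
    · rintro ⟨_, m, hm, rfl⟩
      rw [← IsScalarTower.algebraMap_apply]
      exact IsLocalization.map_units K (⟨m, hm⟩ : nonZeroDivisors A)
    · intro z
      obtain ⟨⟨a, m⟩, hz⟩ := IsLocalization.surj (nonZeroDivisors A) z
      refine ⟨⟨algebraMap A ↥B a, ⟨algebraMap A ↥B m, ⟨m, m.2, rfl⟩⟩⟩, ?_⟩
      simpa [← IsScalarTower.algebraMap_apply] using hz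
    · intro x y hxy
      exact ⟨1, by rw [hinjB hxy]⟩
  have hM'sub : (M' : Set ↥B) ⊆ (nonZeroDivisors ↥B : Submonoid ↥B) := by
    rintro _ ⟨m, hm, rfl⟩
    rw [SetLike.mem_coe, mem_nonZeroDivisors_iff_right]
    intro z hz
    apply hinjB
    rw [map_zero]
    have : algebraMap ↥B K z * algebraMap A K m = 0 := by
      rw [IsScalarTower.algebraMap_apply A ↥B K, ← map_mul, hz, map_zero]
    exact ((IsLocalization.map_units K (⟨m, hm⟩ : nonZeroDivisors A)).mul_left_eq_zero).mp this
  have hA : ∀ p ∈ minimalPrimes A,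
      Disjoint ((nonZeroDivisors A : Submonoid A) : Set A) (p : Set A) :=
    fun p hp => minimalPrimes_disjoint_nonZeroDivisors hp
  have hBdisj : ∀ q ∈ minimalPrimes ↥B, Disjoint (M' : Set ↥B) (q : Set ↥B) :=
    fun q hq => Set.disjoint_of_subset_left hM'sub (minimalPrimes_disjoint_nonZeroDivisors hq)
  have bij1 := bijOn_minimalPrimes_of_isLocalization (S := K) M' hBdisj
  have bij2 := bijOn_minimalPrimes_of_isLocalization (S := K) (nonZeroDivisors A) hA
  have hcomp : ∀ Q : Ideal K,
      (Q.comap (algebraMap ↥B K)).comap (algebraMap A ↥B) = Q.comap (algebraMap A K) := by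
    intro Q
    rw [Ideal.comap_comap, ← IsScalarTower.algebraMap_eq]
  have hKfin : (minimalPrimes K).Finite :=
    Set.Finite.of_finite_image (hfin.subset bij2.mapsTo.image_subset) bij2.injOn
  refine ⟨hRedB, ?_, ?_, ?_, ?_, ?_⟩
  · rw [← bij1.image_eq]
    exact hKfin.image _
  · -- realness
    intro q hq
    obtain ⟨Q, hQ, rfl⟩ := bij1.surjOn hq
    have hQreal : IsRealIdeal Q :=
      isRealIdeal_of_isLocalization (nonZeroDivisors A) (hreal _ (bij2.mapsTo hQ))
    exact hQreal.comap _
  · -- MapsTo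
    intro q hq
    obtain ⟨Q, hQ, rfl⟩ := bij1.surjOn hq
    simpa [hcomp Q] using bij2.mapsTo hQ
  · -- InjOn
    intro q1 h1 q2 h2 he
    obtain ⟨Q1, hQ1, rfl⟩ := bij1.surjOn h1
    obtain ⟨Q2, hQ2, rfl⟩ := bij1.surjOn h2
    simp only [hcomp] at he
    rw [bij2.injOn hQ1 hQ2 he]
  · -- SurjOn
    intro p hp
    obtain ⟨Q, hQ, rfl⟩ := bij2.surjOn hp
    exact ⟨Q.comap (algebraMap ↥B K), bij1.mapsTo hQ, hcomp Q⟩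
end

section
/- Let A be a commutative ring satisfying condition (MP), with total ring of fractions K and integral closure A' of A in K. If an element u ∈ K is integral over the subring O(A) = (1+ΣA²)⁻¹A of K, then there exist a ∈ A' and t ∈ 1+ΣA² such that t·u = a in K; in particular the integral closure of O(A) in K is contained in the subring O(A') = {a/t : a ∈ A', t ∈ 1+Σ(A')²} of K. -/
/-- Given a ring homomorphism `f : A →+* K`, the subring `O(A)` of `K` consisting of the
"fractions" `f a / f (1 + s)` with `s` a sum of squares, described without inverses as the
set of `x : K` with `f (1 + s) * x = f a`. -/
def ringO {A K : Type*} [CommRing A] [CommRing K] (f : A →+* K) : Subring K where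
  carrier := {x | ∃ a s : A, IsSumSq s ∧ f (1 + s) * x = f a}
  zero_mem' := ⟨0, 0, IsSumSq.zero, by simp⟩
  one_mem' := ⟨1, 0, IsSumSq.zero, by simp⟩
  neg_mem' := by
    rintro x ⟨a, s, hs, hx⟩
    exact ⟨-a, s, hs, by rw [mul_neg, hx, map_neg]⟩
  add_mem' := by
    rintro x y ⟨a, s, hs, hx⟩ ⟨b, t, ht, hy⟩
    refine ⟨(1 + t) * a + (1 + s) * b, s + t + s * t, (hs.add ht).add (isSumSq_mul hs ht), ?_⟩
    have h1 : (1 : A) + (s + t + s * t) = (1 + s) * (1 + t) := by ring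
    rw [h1, map_mul]
    have h2 : f (1 + s) * f (1 + t) * (x + y)
        = f (1 + t) * (f (1 + s) * x) + f (1 + s) * (f (1 + t) * y) := by ring
    rw [h2, hx, hy, ← map_mul, ← map_mul, ← map_add]
  mul_mem' := by
    rintro x y ⟨a, s, hs, hx⟩ ⟨b, t, ht, hy⟩
    refine ⟨a * b, s + t + s * t, (hs.add ht).add (isSumSq_mul hs ht), ?_⟩
    have h1 : (1 : A) + (s + t + s * t) = (1 + s) * (1 + t) := by ring
    rw [h1, map_mul]
    have h2 : f (1 + s) * f (1 + t) * (x * y) = (f (1 + s) * x) * (f (1 + t) * y) := by ring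
    rw [h2, hx, hy, ← map_mul]


theorem isSumSq_ringHom_map {R S : Type*} [CommRing R] [CommRing S] (g : R →+* S) {s : R}
    (h : IsSumSq s) : IsSumSq (g s) := by
  induction h with
  | zero => simpa using IsSumSq.zero
  | @sq_add a S _ ih =>
    rw [map_add, map_mul]
    exact IsSumSq.sq_add _ ih

theorem prod_one_add_isSumSq {A : Type*} [CommRing A] (n : ℕ) (s : ℕ → A)
    (hs : ∀ i, IsSumSq (s i)) :
    ∃ S : A, IsSumSq S ∧ (1 : A) + S = ∏ j ∈ Finset.range n, (1 + s j) := by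
  induction n with
  | zero => exact ⟨0, IsSumSq.zero, by simp⟩
  | succ n ih =>
    obtain ⟨S, hS, hSe⟩ := ih
    refine ⟨S + s n + S * s n, (hS.add (hs n)).add (isSumSq_mul hS (hs n)), ?_⟩
    rw [Finset.prod_range_succ, ← hSe]
    ring

set_option maxHeartbeats 1600000 in
theorem key_integral_multiple {A : Type*} [CommRing A]
    (u : FractionRing A)
    (hu : ((ringO (algebraMap A (FractionRing A))).subtype).IsIntegralElem u) :
    ∃ a ∈ integralClosure A (FractionRing A), ∃ s : A, IsSumSq s ∧
      algebraMap A (FractionRing A) (1 + s) * u = a := by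
  set f : A →+* FractionRing A := algebraMap A (FractionRing A) with hf
  set R : Subring (FractionRing A) := ringO f with hR
  by_cases hK : Subsingleton (FractionRing A)
  · exact ⟨0, Subalgebra.zero_mem _, 0, IsSumSq.zero, Subsingleton.elim _ _⟩
  have : Nontrivial (FractionRing A) := not_subsingleton_iff_nontrivial.mp hK
  have : Nontrivial R := ⟨0, 1, fun h => zero_ne_one (congrArg Subtype.val h)⟩
  obtain ⟨p, pm, pe⟩ := hu
  set n := p.natDegree with hn
  have hc : ∀ i : ℕ, ∃ a s : A, IsSumSq s ∧ f (1 + s) * (p.coeff i : FractionRing A) = f a :=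
    fun i => (p.coeff i).2
  choose a s hss he using hc
  set t0 : A := ∏ j ∈ Finset.range n, (1 + s j) with ht0
  obtain ⟨S, hS, hSe⟩ := prod_one_add_isSumSq n s hss
  have htmem : ∀ x : A, f x ∈ R := fun x => ⟨x, 0, IsSumSq.zero, by simp⟩
  set φ : A →+* R := f.codRestrict R htmem with hφ
  have hσφ : R.subtype.comp φ = f := rfl
  set q : Polynomial R := p.scaleRoots (φ t0) with hq
  have qm : q.Monic := (Polynomial.monic_scaleRoots_iff (φ t0)).mpr pm
  have qe : Polynomial.eval₂ R.subtype (R.subtype (φ t0) * u) q = 0 :=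
    Polynomial.scaleRoots_eval₂_eq_zero R.subtype pe
  -- q lifts to a polynomial over A
  have hlift : ∀ i : ℕ, q.coeff i ∈ Set.range φ := by
    intro i
    have h2 : q.coeff i = p.coeff i * (φ t0) ^ (n - i) := Polynomial.coeff_scaleRoots p _ i
    rcases lt_trichotomy i n with hi | hi | hi
    · obtain ⟨k, hk⟩ : ∃ k, n - i = k + 1 := ⟨n - i - 1, by omega⟩
      refine ⟨t0 ^ k * ((∏ j ∈ (Finset.range n).erase i, (1 + s j)) * a i), ?_⟩
      apply Subtype.ext
      have h1 : ((φ (t0 ^ k * ((∏ j ∈ (Finset.range n).erase i, (1 + s j)) * a i))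
          : R) : FractionRing A)
          = f (t0 ^ k * ((∏ j ∈ (Finset.range n).erase i, (1 + s j)) * a i)) := rfl
      have h2' : ((q.coeff i : R) : FractionRing A)
          = (p.coeff i : FractionRing A) * f t0 ^ (n - i) := by
        rw [h2]
        push_cast
        rfl
      have hft0 : f t0 = f (1 + s i) * f (∏ j ∈ (Finset.range n).erase i, (1 + s j)) := by
        rw [← map_mul]
        congr 1
        exact (Finset.mul_prod_erase _ _ (Finset.mem_range.mpr hi)).symm
      rw [h1, h2', hk, pow_succ]
      calc f (t0 ^ k * ((∏ j ∈ (Finset.range n).erase i, (1 + s j)) * a i))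
          = f t0 ^ k * (f (∏ j ∈ (Finset.range n).erase i, (1 + s j)) * f (a i)) := by
            rw [map_mul, map_mul, map_pow]
        _ = f t0 ^ k * (f (∏ j ∈ (Finset.range n).erase i, (1 + s j))
              * (f (1 + s i) * (p.coeff i : FractionRing A))) := by rw [he i]
        _ = (p.coeff i : FractionRing A)
              * (f t0 ^ k * (f (1 + s i)
                * f (∏ j ∈ (Finset.range n).erase i, (1 + s j)))) := by ring
        _ = _ := by rw [← hft0]
    · exact ⟨1, by rw [map_one, h2, hi, Nat.sub_self, pow_zero, mul_one, pm.coeff_natDegree]⟩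
    · exact ⟨0, by
        rw [map_zero, h2, Polynomial.coeff_eq_zero_of_natDegree_lt hi, zero_mul]⟩
  obtain ⟨r, hrmap, _, rm⟩ :=
    Polynomial.lifts_and_degree_eq_and_monic ((Polynomial.lifts_iff_coeff_lifts q).mpr hlift) qm
  have re : Polynomial.eval₂ f (f t0 * u) r = 0 := by
    have h3 : Polynomial.eval₂ R.subtype (R.subtype (φ t0) * u) (r.map φ) =
        Polynomial.eval₂ (R.subtype.comp φ) (R.subtype (φ t0) * u) r :=
      Polynomial.eval₂_map φ R.subtype _
    rw [hrmap, qe] at h3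
    rw [hσφ] at h3
    exact h3.symm
  exact ⟨f t0 * u, ⟨r, rm, re⟩, S, hS, by rw [hSe]⟩

/-- Let `A` satisfy (MP), with total ring of fractions `K` and integral
closure `A'` of `A` in `K`. If `u ∈ K` is integral over the subring
`O(A) = (1+ΣA²)⁻¹A ⊆ K`, then `t · u = a` in `K` for some `a ∈ A'` and `t = 1 + s` with
`s ∈ ΣA²`; in particular the integral closure of `O(A)` in `K` is contained in the subring
`O(A') = {a/t : a ∈ A', t ∈ 1+Σ(A')²}` of `K`. -/
theorem integral_over_ringO_mem_ringO_integralClosure {A : Type*} [CommRing A] [IsReduced A]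
    (hfin : (minimalPrimes A).Finite)
    (hreal : ∀ p ∈ minimalPrimes A, IsRealIdeal p)
    (u : FractionRing A)
    (hu : ((ringO (algebraMap A (FractionRing A))).subtype).IsIntegralElem u) :
    (∃ a ∈ integralClosure A (FractionRing A), ∃ s : A, IsSumSq s ∧
        algebraMap A (FractionRing A) (1 + s) * u = a) ∧
    (∀ v : FractionRing A,
        ((ringO (algebraMap A (FractionRing A))).subtype).IsIntegralElem v →
        v ∈ ringO ((integralClosure A (FractionRing A)).toSubring.subtype)) := by
  have main : ∀ w : FractionRing A,
      ((ringO (algebraMap A (FractionRing A))).subtype).IsIntegralElem w →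
      w ∈ ringO ((integralClosure A (FractionRing A)).toSubring.subtype) := by
    intro w hw
    obtain ⟨b, hb, sw, hsw, hew⟩ := key_integral_multiple w hw
    set ψ : A →+* (integralClosure A (FractionRing A)).toSubring :=
      (algebraMap A (FractionRing A)).codRestrict _ (fun x => isIntegral_algebraMap) with hψ
    refine ⟨⟨b, hb⟩, ψ sw, isSumSq_ringHom_map ψ hsw, ?_⟩
    have h1 : ((integralClosure A (FractionRing A)).toSubring.subtype) (1 + ψ sw)
        = algebraMap A (FractionRing A) (1 + sw) := by
      rw [RingHom.map_add, RingHom.map_add, RingHom.map_one, RingHom.map_one]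
      rfl
    rw [h1, hew]
    rfl
  exact ⟨key_integral_multiple u hu, main⟩
end

section
/- Let A be a commutative ring satisfying condition (MP), with total ring of fractions K, let A' be the integral closure of A in K, and let B be a ring with A ⊆ B ⊆ A'. Assume the extension A → B is biregular, i.e. the subrings O(A) = (1+ΣA²)⁻¹A and O(B) = {b/t : b ∈ B, t ∈ 1+ΣB²} of K coincide. Then for every real prime ideal p of A there is exactly one prime ideal q of B lying over p; moreover this q is a real ideal and the canonical homomorphism A_p → B_q is an isomorphism. -/
lemma IsSumSq.exists_fin {A : Type*} [CommRing A] {s : A} (hs : IsSumSq s) :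
    ∃ (n : ℕ) (a : Fin n → A), s = ∑ i, a i ^ 2 := by
  induction hs with
  | zero => exact ⟨0, ![], by simp⟩
  | @sq_add a S hS ih =>
    obtain ⟨n, b, rfl⟩ := ih
    refine ⟨n + 1, Fin.cons a b, ?_⟩
    rw [Fin.sum_univ_succ]
    simp [sq]

lemma IsRealIdeal.one_add_notMem {A : Type*} [CommRing A] {I : Ideal A} (hI : IsRealIdeal I)
    (hne : I ≠ ⊤) {s : A} (hs : IsSumSq s) : 1 + s ∉ I := by
  intro h
  obtain ⟨n, a, rfl⟩ := hs.exists_fin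
  have h1 : (∑ i : Fin (n + 1), (Fin.cons 1 a : Fin (n + 1) → A) i ^ 2) ∈ I := by
    rw [Fin.sum_univ_succ]; simpa using h
  have h0 := hI (n + 1) (Fin.cons 1 a) h1 0
  simp only [Fin.cons_zero] at h0
  exact hne (Ideal.eq_top_iff_one I |>.mpr h0)

set_option maxHeartbeats 1000000 in
set_option synthInstance.maxHeartbeats 100000 in
/-- Let `A` satisfy (MP), with total ring of fractions `K` and integral
closure `A'` in `K`, and let `A ⊆ B ⊆ A'` be a biregular extension, i.e. `O(A) = O(B)` as
subrings of `K`. Then over every real prime ideal `p` of `A` there lies exactly one prime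
ideal `q` of `B`; moreover any such `q` is a real ideal and the canonical homomorphism
`A_p → B_q` is an isomorphism (bijective). -/
theorem biregular_real_lying_over {A : Type*} [CommRing A] [IsReduced A]
    (hfin : (minimalPrimes A).Finite)
    (hreal : ∀ p ∈ minimalPrimes A, IsRealIdeal p)
    (B : Subring (FractionRing A))
    (hAB : (algebraMap A (FractionRing A)).range ≤ B)
    (hBA : B ≤ (integralClosure A (FractionRing A)).toSubring)
    (hbireg : ringO (algebraMap A (FractionRing A)) = ringO B.subtype)
    (g : A →+* B) (hg : ∀ a : A, ((g a : FractionRing A)) = algebraMap A (FractionRing A) a)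
    (p : Ideal A) [hp : p.IsPrime] (hpr : IsRealIdeal p) :
    (∃! q : Ideal B, q.IsPrime ∧ q.comap g = p) ∧
    ∀ q : Ideal B, ∀ (hq : q.IsPrime), q.comap g = p →
      IsRealIdeal q ∧ ∀ (hc : p = q.comap g),
        Function.Bijective (@Localization.localRingHom A _ B _ p hp q hq g hc) := by
  classical
  set K := FractionRing A
  set f := algebraMap A K with hf_def
  have hfinj : Function.Injective f := IsFractionRing.injective A K
  have hginj : Function.Injective g := fun a b h => hfinj (by rw [← hg, ← hg, h])
  -- every element of B has a "fraction" representation over A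
  have hrep : ∀ b : B, ∃ a s : A, IsSumSq s ∧ g (1 + s) * b = g a := by
    intro b
    have hb : (b : K) ∈ ringO B.subtype := ⟨b, 0, IsSumSq.zero, by simp⟩
    rw [← hbireg] at hb
    obtain ⟨a, s, hs, h⟩ := hb
    refine ⟨a, s, hs, Subtype.coe_injective ?_⟩
    push_cast
    rw [hg, hg]
    exact h
  have hnot : ∀ {s : A}, IsSumSq s → 1 + s ∉ p := fun hs => hpr.one_add_notMem hp.ne_top hs
  -- membership in a prime over p is determined by representations
  have hmem : ∀ (q : Ideal B), q.IsPrime → q.comap g = p →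
      ∀ (b : B) (a s : A), IsSumSq s → g (1 + s) * b = g a → (b ∈ q ↔ a ∈ p) := by
    intro q hq hqc b a s hs heq
    constructor
    · intro hb
      have : g a ∈ q := heq ▸ Ideal.mul_mem_left q _ hb
      rw [← hqc]; exact this
    · intro ha
      have hga : g a ∈ q := by rw [← hqc] at ha; exact ha
      rw [← heq] at hga
      rcases hq.mem_or_mem hga with h | h
      · exact absurd (hqc ▸ h : (1 + s) ∈ p) (hnot hs)
      · exact h
  -- existence of a prime over p, via lying over for integral extensions
  letI : Algebra A B := g.toAlgebra
  have halg : algebraMap A B = g := rfl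
  haveI : Algebra.IsIntegral A B := by
    refine ⟨fun b => ?_⟩
    have hbi : IsIntegral A ((b : K)) := hBA b.2
    obtain ⟨P, hPmonic, hPeval⟩ := hbi
    refine ⟨P, hPmonic, Subtype.coe_injective ?_⟩
    show B.subtype (Polynomial.eval₂ (algebraMap A B) b P) = B.subtype 0
    have hcomp : B.subtype.comp (algebraMap A B) = f := RingHom.ext fun a => hg a
    rw [Polynomial.hom_eval₂, hcomp, map_zero]
    exact hPeval
  have hker : (⊥ : Ideal B).comap (algebraMap A B) ≤ p := by
    intro x hx
    simp only [Ideal.mem_comap, Ideal.mem_bot, halg] at hx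
    have hx0 : x = 0 := hginj (by rw [hx, map_zero])
    exact hx0 ▸ p.zero_mem
  obtain ⟨q₀, -, hq₀, hq₀c⟩ := Ideal.exists_ideal_over_prime_of_isIntegral p ⊥ hker
  rw [halg] at hq₀c
  -- uniqueness
  have huniq : ∀ q : Ideal B, q.IsPrime → q.comap g = p → q = q₀ := by
    intro q hq hqc
    ext b
    obtain ⟨a, s, hs, heq⟩ := hrep b
    rw [hmem q hq hqc b a s hs heq, hmem q₀ hq₀ hq₀c b a s hs heq]
  refine ⟨⟨q₀, ⟨hq₀, hq₀c⟩, fun q hq => huniq q hq.1 hq.2⟩, ?_⟩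
  intro q hq hqc
  haveI := hq
  -- common denominator representation for finitely many elements of B
  have hrepn : ∀ (n : ℕ) (b : Fin n → B), ∃ (S : A) (c : Fin n → A),
      IsSumSq S ∧ ∀ i, g (1 + S) * b i = g (c i) := by
    intro n
    induction n with
    | zero => exact fun b => ⟨0, ![], IsSumSq.zero, fun i => i.elim0⟩
    | succ n ih =>
      intro b
      obtain ⟨S, c, hS, hc⟩ := ih (fun i => b i.succ)
      obtain ⟨a, s, hs, ha⟩ := hrep (b 0)
      refine ⟨S + s + S * s, Fin.cons ((1 + S) * a) (fun i => (1 + s) * c i),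
        (hS.add hs).add (isSumSq_mul hS hs), ?_⟩
      have hkey : (1 : A) + (S + s + S * s) = (1 + S) * (1 + s) := by ring
      intro i
      refine Fin.cases ?_ (fun j => ?_) i
      · rw [Fin.cons_zero, hkey, map_mul]
        calc g (1 + S) * g (1 + s) * b 0 = g (1 + S) * (g (1 + s) * b 0) := by ring
        _ = g (1 + S) * g a := by rw [ha]
        _ = g ((1 + S) * a) := by rw [map_mul]
      · rw [Fin.cons_succ, hkey, map_mul]
        calc g (1 + S) * g (1 + s) * b j.succ = g (1 + s) * (g (1 + S) * b j.succ) := by ring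
        _ = g (1 + s) * g (c j) := by rw [hc j]
        _ = g ((1 + s) * c j) := by rw [map_mul]
  constructor
  · -- q is a real ideal
    intro n b hb i
    obtain ⟨S, c, hS, hc⟩ := hrepn n b
    have hS' : IsSumSq (S + S + S * S) := (hS.add hS).add (isSumSq_mul hS hS)
    have hkey : g (1 + (S + S + S * S)) * (∑ j, b j ^ 2) = g (∑ j, c j ^ 2) := by
      have h1 : (1 : A) + (S + S + S * S) = (1 + S) * (1 + S) := by ring
      rw [h1, map_mul, map_sum]
      calc g (1 + S) * g (1 + S) * ∑ j, b j ^ 2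
          = ∑ j, (g (1 + S) * b j) * (g (1 + S) * b j) := by
            rw [Finset.mul_sum]; congr 1; funext j; ring
        _ = ∑ j, g (c j) ^ 2 := by
            refine Finset.sum_congr rfl fun j _ => ?_
            rw [hc j]; ring
        _ = ∑ j, g (c j ^ 2) := by simp [map_pow]
    have hcp : (∑ j, c j ^ 2) ∈ p := (hmem q hq hqc _ _ _ hS' hkey).mp hb
    have hci : c i ∈ p := hpr n c hcp i
    exact (hmem q hq hqc (b i) (c i) S hS (hc i)).mpr hci
  · intro hc
    set lrh := @Localization.localRingHom A _ B _ p hp q hq g hc with hlrh_def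
    constructor
    · -- injectivity
      rw [injective_iff_map_eq_zero]
      intro x hx
      obtain ⟨⟨a, u⟩, rfl⟩ := IsLocalization.mk'_surjective p.primeCompl x
      rw [hlrh_def, Localization.localRingHom_mk'] at hx
      rw [IsLocalization.mk'_eq_zero_iff] at hx
      obtain ⟨⟨d, hd⟩, hda⟩ := hx
      obtain ⟨e, s, hs, hes⟩ := hrep d
      have hd' : e ∉ p := fun h => hd ((hmem q hq hqc d e s hs hes).mpr h)
      have : g (e * a) = 0 := by
        have : g (1 + s) * (d * g a) = 0 := by rw [hda, mul_zero]
        calc g (e * a) = g e * g a := map_mul g e a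
          _ = (g (1 + s) * d) * g a := by rw [hes]
          _ = g (1 + s) * (d * g a) := by ring
          _ = 0 := this
      have hea : e * a = 0 := hginj (by simpa using this)
      rw [IsLocalization.mk'_eq_zero_iff]
      exact ⟨⟨e, hd'⟩, hea⟩
    · -- surjectivity
      intro y
      obtain ⟨⟨b, u⟩, rfl⟩ := IsLocalization.mk'_surjective q.primeCompl y
      obtain ⟨a, s, hs, has⟩ := hrep b
      obtain ⟨e, t, ht, het⟩ := hrep (u : B)
      have hu : (u : B) ∉ q := u.2
      have he : e ∉ p := fun h => hu ((hmem q hq hqc u e t ht het).mpr h)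
      have hden : e * (1 + s) ∈ p.primeCompl :=
        Submonoid.mul_mem _ he (hnot hs)
      refine ⟨IsLocalization.mk' _ (a * (1 + t)) (⟨e * (1 + s), hden⟩ : p.primeCompl), ?_⟩
      rw [hlrh_def, Localization.localRingHom_mk']
      rw [IsLocalization.mk'_eq_iff_eq]
      congr 1
      calc (u : B) * g (a * (1 + t))
          = (g (1 + t) * u) * g a := by rw [map_mul]; ring
        _ = g e * g a := by rw [het]
        _ = g e * (g (1 + s) * b) := by rw [has]
        _ = g (e * (1 + s)) * b := by rw [map_mul]; ring
end

section
/- Let A be a commutative ring and O(A) = (1+ΣA²)⁻¹A its localization at the multiplicative subset of elements of the form 1 plus a sum of squares. Then every element of O(A) of the form 1 + s, where s is a sum of squares of elements of O(A), is a unit of O(A). -/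
theorem loc_mk_surj_aux {A : Type*} [CommRing A] (M : Submonoid A) (x : Localization M) :
    ∃ (n : A) (m : M), x = Localization.mk n m :=
  Localization.induction_on x fun ⟨n, m⟩ => ⟨n, m, rfl⟩

theorem sumSq_loc_rep {A : Type*} [CommRing A] {s : Localization (oneAddSumSq A)}
    (hs : IsSumSq s) :
    ∃ (t : A) (d : oneAddSumSq A), IsSumSq t ∧ s = Localization.mk t (d * d) := by
  induction hs with
  | zero =>
    exact ⟨0, 1, IsSumSq.zero, by rw [Localization.mk_zero]⟩
  | @sq_add a S pS ih =>
    obtain ⟨t, d, ht, rfl⟩ := ih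
    obtain ⟨n, m, rfl⟩ := loc_mk_surj_aux _ a
    have hsum : IsSumSq ((n * d) * (n * d) + m * m * t) := by
      have := (IsSumSq.sq_add (n * (d : A)) IsSumSq.zero).add (isSumSq_sq_mul (m : A) ht)
      simpa using this
    refine ⟨(n * d) * (n * d) + m * m * t, m * d, hsum, ?_⟩
    rw [Localization.mk_mul, Localization.add_mk, Localization.mk_eq_mk_iff,
      Localization.r_eq_r']
    refine (Localization.r' _).symm ⟨1, ?_⟩
    push_cast
    ring

/-- In `O(A) = (1+ΣA²)⁻¹A`, every element of the form `1 + s`, with `s` a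
sum of squares of elements of `O(A)`, is a unit. -/
theorem isUnit_one_add_isSumSq_ringOfRegular {A : Type*} [CommRing A]
    (s : Localization (oneAddSumSq A)) (hs : IsSumSq s) :
    IsUnit (1 + s) := by
  obtain ⟨t, d, ht, rfl⟩ := sumSq_loc_rep hs
  obtain ⟨u, hu, hd⟩ := d.2
  have hnum : (d : A) * d + t ∈ oneAddSumSq A := by
    refine ⟨u * u + u + u + t, ((((isSumSq_mul hu hu).add hu).add hu).add ht), ?_⟩
    rw [hd]; push_cast; ring
  have h1 : (1 : Localization (oneAddSumSq A)) + Localization.mk t (d * d) =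
      Localization.mk ((d : A) * d + t) (d * d) := by
    rw [← Localization.mk_one, Localization.add_mk, Localization.mk_eq_mk_iff,
      Localization.r_eq_r']
    refine (Localization.r' _).symm ⟨1, ?_⟩
    push_cast
    ring
  rw [h1]
  refine IsUnit.of_mul_eq_one (Localization.mk ((d : A) * d) ⟨_, hnum⟩) ?_
  rw [Localization.mk_mul]
  rw [mul_comm (d * d)]
  exact Localization.mk_self (⟨_, hnum⟩ * (d * d))
end

section
/- Let A be a commutative ring and O(A) = (1+ΣA²)⁻¹A. Every real prime ideal p of A is disjoint from 1+ΣA², its extension p·O(A) is a real prime ideal of O(A), and the assignments p ↦ p·O(A) and Q ↦ Q ∩ A (contraction along the localization map A → O(A)) are mutually inverse bijections between the set of real prime ideals of A and the set of real prime ideals of O(A). -/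
theorem isSumSq_exists {A : Type*} [CommRing A] {s : A} (h : IsSumSq s) :
    ∃ (n : ℕ) (a : Fin n → A), s = ∑ i, a i ^ 2 := by
  induction h with
  | zero => exact ⟨0, ![], by simp⟩
  | @sq_add b T pT ih =>
    obtain ⟨n, a, rfl⟩ := ih
    exact ⟨n + 1, Fin.cons b a, by rw [Fin.sum_univ_succ]; simp [Fin.cons_succ]; ring⟩

/-- For a commutative ring `A` with `O(A) = (1+ΣA²)⁻¹A`: every real prime
ideal `p` of `A` is disjoint from `1+ΣA²`, its extension `p·O(A)` is a real prime ideal of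
`O(A)`, and extension and contraction along `A → O(A)` are mutually inverse bijections
between the real prime ideals of `A` and those of `O(A)`. -/
theorem realSpec_localization_bijection {A : Type*} [CommRing A] :
    (∀ p : Ideal A, p.IsPrime → IsRealIdeal p →
      (∀ s : A, IsSumSq s → 1 + s ∉ p) ∧
      (p.map (algebraMap A (Localization (oneAddSumSq A)))).IsPrime ∧
      IsRealIdeal (p.map (algebraMap A (Localization (oneAddSumSq A)))) ∧
      (p.map (algebraMap A (Localization (oneAddSumSq A)))).comap
          (algebraMap A (Localization (oneAddSumSq A))) = p) ∧
    (∀ Q : Ideal (Localization (oneAddSumSq A)), Q.IsPrime → IsRealIdeal Q →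
      (Q.comap (algebraMap A (Localization (oneAddSumSq A)))).IsPrime ∧
      IsRealIdeal (Q.comap (algebraMap A (Localization (oneAddSumSq A)))) ∧
      (Q.comap (algebraMap A (Localization (oneAddSumSq A)))).map
          (algebraMap A (Localization (oneAddSumSq A))) = Q) := by
  classical
  have key : ∀ p : Ideal A, p.IsPrime → IsRealIdeal p →
      Disjoint ((oneAddSumSq A : Submonoid A) : Set A) (p : Set A) := by
    intro p hp hr
    rw [Set.disjoint_left]
    rintro x ⟨s, hs, rfl⟩ hxp
    obtain ⟨n, a, rfl⟩ := isSumSq_exists hs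
    have h1 : (∑ i : Fin (n+1), (Fin.cons 1 a : Fin (n+1) → A) i ^ 2) ∈ p := by
      rw [Fin.sum_univ_succ]; simp only [Fin.cons_zero, Fin.cons_succ]
      simpa using hxp
    have h0 := hr _ _ h1 0
    simp only [Fin.cons_zero] at h0
    exact hp.ne_top ((Ideal.eq_top_iff_one p).2 h0)
  constructor
  · intro p hp hr
    have hdisj := key p hp hr
    have hnot : ∀ s : A, IsSumSq s → 1 + s ∉ p := fun s hs hmem =>
      Set.disjoint_left.1 hdisj ⟨s, hs, rfl⟩ hmem
    have hprime : (p.map (algebraMap A (Localization (oneAddSumSq A)))).IsPrime :=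
      IsLocalization.isPrime_of_isPrime_disjoint (oneAddSumSq A) _ p hp hdisj
    have hcomap : (p.map (algebraMap A (Localization (oneAddSumSq A)))).comap
        (algebraMap A (Localization (oneAddSumSq A))) = p :=
      IsLocalization.comap_map_of_isPrime_disjoint (oneAddSumSq A) _ hp hdisj
    refine ⟨hnot, hprime, ?_, hcomap⟩
    intro n x hx i
    obtain ⟨b, hb⟩ := IsLocalization.exist_integer_multiples (oneAddSumSq A) Finset.univ x
    choose a ha using fun j => hb j (Finset.mem_univ j)
    have hfa : ∀ j, algebraMap A (Localization (oneAddSumSq A)) (a j)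
        = algebraMap A (Localization (oneAddSumSq A)) (b : A) * x j := by
      intro j
      rw [ha j, Algebra.smul_def]
    have hsum : (∑ j, a j ^ 2) ∈ p := by
      rw [← hcomap, Ideal.mem_comap]
      have heq : algebraMap A (Localization (oneAddSumSq A)) (∑ j, a j ^ 2)
          = algebraMap A (Localization (oneAddSumSq A)) (b : A) ^ 2 * ∑ j, x j ^ 2 := by
        rw [map_sum, Finset.mul_sum]
        refine Finset.sum_congr rfl fun j _ => ?_
        rw [map_pow, hfa j, mul_pow]
      rw [heq]
      exact Ideal.mul_mem_left _ _ hx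
    have hai : a i ∈ p := hr _ _ hsum i
    have hmem : algebraMap A (Localization (oneAddSumSq A)) (b : A) * x i
        ∈ p.map (algebraMap A (Localization (oneAddSumSq A))) := by
      rw [← hfa i]; exact Ideal.mem_map_of_mem _ hai
    have hbu : IsUnit (algebraMap A (Localization (oneAddSumSq A)) (b : A)) :=
      IsLocalization.map_units _ b
    rcases hprime.mem_or_mem hmem with hc | hc
    · exact absurd ((Ideal.eq_top_of_isUnit_mem _ hc hbu)) hprime.ne_top
    · exact hc
  · intro Q hQ hr
    refine ⟨hQ.comap _, ?_, IsLocalization.map_comap (oneAddSumSq A) _ Q⟩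
    intro n a ha i
    have h1 : algebraMap A (Localization (oneAddSumSq A)) (∑ j, a j ^ 2) ∈ Q := ha
    rw [map_sum] at h1
    simp_rw [map_pow] at h1
    exact hr n (fun j => algebraMap A (Localization (oneAddSumSq A)) (a j)) h1 i
end

section
/- Let n ≥ 1, let I be an ideal of the polynomial ring ℝ[x₁, …, xₙ], let A = ℝ[x₁, …, xₙ]/I, and let Z(I) = {x ∈ ℝⁿ : f(x) = 0 for all f ∈ I}. Then every maximal ideal of A that is a real ideal is of the form m_x = {f ∈ A : f(x) = 0} for some point x ∈ Z(I). -/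
/-- Let `A = ℝ[x₁,…,xₙ]/I`. Every maximal ideal of `A` which is a real
ideal is the ideal `m_x` of functions vanishing at some point `x` of the real zero set
`Z(I) ⊆ ℝⁿ`. -/
theorem real_maximal_ideal_eq_point {n : ℕ} (hn : 1 ≤ n)
    (I : Ideal (MvPolynomial (Fin n) ℝ))
    (m : Ideal (MvPolynomial (Fin n) ℝ ⧸ I)) (hm : m.IsMaximal) (hr : IsRealIdeal m) :
    ∃ x : Fin n → ℝ, (∀ f ∈ I, MvPolynomial.eval x f = 0) ∧
      ∀ f : MvPolynomial (Fin n) ℝ, Ideal.Quotient.mk I f ∈ m ↔ MvPolynomial.eval x f = 0 := by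
  classical
  -- Pull back to a maximal ideal M of the polynomial ring
  set M : Ideal (MvPolynomial (Fin n) ℝ) := m.comap (Ideal.Quotient.mk I) with hM
  have hIM : I ≤ M := fun f hf => by
    simp [hM, Ideal.mem_comap, Ideal.Quotient.eq_zero_iff_mem.mpr hf]
  have hMmax : M.IsMaximal :=
    Ideal.comap_isMaximal_of_surjective _ Ideal.Quotient.mk_surjective
  haveI := hMmax
  -- The quotient field F
  letI F := MvPolynomial (Fin n) ℝ ⧸ M
  letI : Field F := Ideal.Quotient.field M
  have hint : RingHom.IsIntegral (RingHom.comp (Ideal.Quotient.mk M) (MvPolynomial.C)) :=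
    MvPolynomial.quotient_mk_comp_C_isIntegral_of_isJacobsonRing M
  have halg : Algebra.IsIntegral ℝ F := by
    constructor
    intro x
    have : algebraMap ℝ F = RingHom.comp (Ideal.Quotient.mk M) (MvPolynomial.C) := by
      ext r
      rfl
    rw [IsIntegral, RingHom.IsIntegralElem, this]
    exact hint x
  haveI : Algebra.IsAlgebraic ℝ F := Algebra.IsIntegral.isAlgebraic
  haveI : NoZeroSMulDivisors ℝ F :=
    inferInstance
  -- Embed F into ℂ
  let φ : F →ₐ[ℝ] ℂ := IsAlgClosed.lift
  have hφinj : Function.Injective φ := φ.toRingHom.injective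
  -- The image of φ is real: otherwise we find β with β² = -1, contradicting realness.
  have hreal : ∀ α : F, (φ α).im = 0 := by
    intro α
    by_contra hb
    set a : ℝ := (φ α).re
    set b : ℝ := (φ α).im
    -- β := (α - a) / b has φ β = i
    set β : F := (algebraMap ℝ F b)⁻¹ * (α - algebraMap ℝ F a) with hβ
    have hb' : b ≠ 0 := hb
    have hφβ : φ β = Complex.I := by
      have hba : φ (algebraMap ℝ F b) = (b : ℂ) := φ.commutes b
      have haa : φ (algebraMap ℝ F a) = (a : ℂ) := φ.commutes a
      have h1 : (φ α : ℂ) = (a : ℂ) + (b : ℂ) * Complex.I := (Complex.re_add_im (φ α)).symm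
      rw [hβ, map_mul, map_inv₀, map_sub, hba, haa, h1, add_sub_cancel_left,
        inv_mul_cancel_left₀ (Complex.ofReal_ne_zero.mpr hb')]
    have hβ2 : β ^ 2 = -1 := by
      apply hφinj
      rw [map_pow, hφβ, map_neg, map_one, Complex.I_sq]
    -- realness contradiction
    obtain ⟨c, hc⟩ := Ideal.Quotient.mk_surjective (I := M) β
    have hsum : (∑ i : Fin 2, (![c, 1] i) ^ 2) ∈ M := by
      have : Ideal.Quotient.mk M (∑ i : Fin 2, (![c, 1] i) ^ 2) = 0 := by
        simp [Fin.sum_univ_two, hc, hβ2]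
      exact Ideal.Quotient.eq_zero_iff_mem.mp this
    have hMreal : IsRealIdeal M := by
      intro k a ha i
      have : (∑ j, (Ideal.Quotient.mk I (a j)) ^ 2) ∈ m := by
        have : Ideal.Quotient.mk I (∑ j, a j ^ 2) ∈ m := ha
        simpa [map_sum, map_pow] using this
      exact hr k (fun j => Ideal.Quotient.mk I (a j)) this i
    have h1 : (1 : MvPolynomial (Fin n) ℝ) ∈ M := by
      have := hMreal 2 ![c, 1] hsum 1
      simpa using this
    exact hMmax.ne_top ((Ideal.eq_top_iff_one M).mpr h1)
  -- Define the point x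
  set x : Fin n → ℝ := fun i => (φ (Ideal.Quotient.mk M (MvPolynomial.X i))).re with hx
  -- Key: φ ∘ mk M = Complex.ofReal ∘ eval x as ring homs on polynomials
  have key : ∀ f : MvPolynomial (Fin n) ℝ,
      φ (Ideal.Quotient.mk M f) = ((MvPolynomial.eval x f : ℝ) : ℂ) := by
    intro f
    have h1 : (φ.comp (Ideal.Quotient.mkₐ ℝ M) : MvPolynomial (Fin n) ℝ →ₐ[ℝ] ℂ) =
        (Complex.ofRealAm.comp
          (MvPolynomial.aeval x : MvPolynomial (Fin n) ℝ →ₐ[ℝ] ℝ)) := by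
      apply MvPolynomial.algHom_ext
      intro i
      simp only [AlgHom.comp_apply, MvPolynomial.aeval_X]
      have hmk : (Ideal.Quotient.mkₐ ℝ M) (MvPolynomial.X i)
          = Ideal.Quotient.mk M (MvPolynomial.X i) := rfl
      rw [hmk]
      apply Complex.ext
      · simp [hx, Complex.ofRealAm_coe]
      · simpa [Complex.ofRealAm_coe] using hreal (Ideal.Quotient.mk M (MvPolynomial.X i))
    have h2 := AlgHom.congr_fun h1 f
    exact h2
  refine ⟨x, ?_, ?_⟩
  · intro f hf
    have : φ (Ideal.Quotient.mk M f) = 0 := by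
      rw [Ideal.Quotient.eq_zero_iff_mem.mpr (hIM hf), map_zero]
    rw [key f] at this
    exact_mod_cast this
  · intro f
    constructor
    · intro hf
      have hfM : f ∈ M := hf
      have : φ (Ideal.Quotient.mk M f) = 0 := by
        rw [Ideal.Quotient.eq_zero_iff_mem.mpr hfM, map_zero]
      rw [key f] at this
      exact_mod_cast this
    · intro hf
      have : φ (Ideal.Quotient.mk M f) = 0 := by rw [key f, hf]; simp
      have h3 : Ideal.Quotient.mk M f = 0 := hφinj (by simpa using this)
      have hfM : f ∈ M := Ideal.Quotient.eq_zero_iff_mem.mp h3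
      exact hfM
end

section
/- Let X ⊆ ℝⁿ be an irreducible real algebraic set, i.e. X = Z(I(X)) where I(X) ⊆ ℝ[x₁, …, xₙ], the ideal of all polynomials vanishing on X, is a prime ideal, and let A = ℝ[x₁, …, xₙ]/I(X) be its ring of polynomial functions, an integral domain with fraction field F. For x ∈ X set m_x = {f ∈ A : f(x) = 0}, and let S = {f ∈ A : f(x) ≠ 0 for all x ∈ X}. Then, as subrings of F, the ring of regular functions O(X) = S⁻¹A equals the intersection ⋂_{x ∈ X} A_{m_x} of the localizations of A at the maximal ideals of the points of X. -/
set_option synthInstance.maxHeartbeats 1000000 in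
set_option maxHeartbeats 2000000 in
/-- Let `X ⊆ ℝⁿ` be an irreducible real algebraic set: `I = I(X)` is the
(prime) ideal of polynomials vanishing on `X` and `X = Z(I)`. Let `A = ℝ[x₁,…,xₙ]/I` be
its ring of polynomial functions, with fraction field `F`, and for `x ∈ X` let
`m_x = {f ∈ A : f(x) = 0}`. Then, inside `F`, the ring of regular functions
`O(X) = S⁻¹A` — where `S` is the set of polynomial functions vanishing nowhere on `X` —
equals the intersection `⋂_{x ∈ X} A_{m_x}` of the localizations of `A` at the maximal
ideals of the points of `X`. Fractions `ξ = a/b` of `F` are encoded by the relation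
`b · ξ = a`. -/
theorem ringOfRegular_eq_iInter_localizations_at_points {n : ℕ}
    (X : Set (Fin n → ℝ)) (I : Ideal (MvPolynomial (Fin n) ℝ))
    (hI : ∀ f : MvPolynomial (Fin n) ℝ, f ∈ I ↔ ∀ x ∈ X, MvPolynomial.eval x f = 0)
    (hprime : I.IsPrime)
    (hX : ∀ x : Fin n → ℝ, x ∈ X ↔ ∀ f ∈ I, MvPolynomial.eval x f = 0) :
    {ξ : FractionRing (MvPolynomial (Fin n) ℝ ⧸ I) |
      ∃ a b : MvPolynomial (Fin n) ℝ ⧸ I,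
        (∀ (x : Fin n → ℝ) (hx : x ∈ X),
          Ideal.Quotient.lift I (MvPolynomial.eval x) ((hX x).mp hx) b ≠ 0) ∧
        algebraMap (MvPolynomial (Fin n) ℝ ⧸ I) (FractionRing (MvPolynomial (Fin n) ℝ ⧸ I)) b
            * ξ =
          algebraMap (MvPolynomial (Fin n) ℝ ⧸ I)
            (FractionRing (MvPolynomial (Fin n) ℝ ⧸ I)) a} =
    {ξ : FractionRing (MvPolynomial (Fin n) ℝ ⧸ I) |
      ∀ (x : Fin n → ℝ) (hx : x ∈ X),
        ∃ a b : MvPolynomial (Fin n) ℝ ⧸ I,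
          Ideal.Quotient.lift I (MvPolynomial.eval x) ((hX x).mp hx) b ≠ 0 ∧
          algebraMap (MvPolynomial (Fin n) ℝ ⧸ I)
              (FractionRing (MvPolynomial (Fin n) ℝ ⧸ I)) b * ξ =
            algebraMap (MvPolynomial (Fin n) ℝ ⧸ I)
              (FractionRing (MvPolynomial (Fin n) ℝ ⧸ I)) a} := by
  classical
  ext ξ
  simp only [Set.mem_setOf_eq]
  constructor
  · rintro ⟨a, b, hb, hab⟩ x hx
    exact ⟨a, b, hb x hx, hab⟩
  · intro h
    let φ : (MvPolynomial (Fin n) ℝ ⧸ I) →+* FractionRing (MvPolynomial (Fin n) ℝ ⧸ I) :=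
      algebraMap _ _
    let D : Ideal (MvPolynomial (Fin n) ℝ ⧸ I) :=
    { carrier := {b | ∃ a : MvPolynomial (Fin n) ℝ ⧸ I, φ b * ξ = φ a}
      add_mem' := by
        rintro p q ⟨a, ha⟩ ⟨c, hc⟩
        exact ⟨a + c, by rw [map_add, map_add, add_mul, ha, hc]⟩
      zero_mem' := ⟨0, by simp⟩
      smul_mem' := by
        rintro c p ⟨a, ha⟩
        exact ⟨c * a, by rw [smul_eq_mul, map_mul, map_mul, mul_assoc, ha]⟩ }
    have hDfg : D.FG := IsNoetherian.noetherian D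
    obtain ⟨s, hs⟩ := hDfg
    have hsD : ∀ g ∈ s, g ∈ D := fun g hg => hs ▸ Ideal.subset_span hg
    have hbD : (∑ g ∈ s, g * g) ∈ D :=
      Submodule.sum_mem D fun g hg => D.mul_mem_left g (hsD g hg)
    obtain ⟨a, hab⟩ := hbD
    refine ⟨a, ∑ g ∈ s, g * g, ?_, hab⟩
    intro x hx hzero
    set ev := Ideal.Quotient.lift I (MvPolynomial.eval x) ((hX x).mp hx) with hev
    have hsum : ∀ g ∈ s, ev g = 0 := by
      rw [map_sum] at hzero
      simp only [map_mul] at hzero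
      have := (Finset.sum_eq_zero_iff_of_nonneg
        (fun g _ => mul_self_nonneg (ev g))).mp hzero
      intro g hg
      exact mul_self_eq_zero.mp (this g hg)
    obtain ⟨a', b', hb', hab'⟩ := h x hx
    have hb'D : b' ∈ D := ⟨a', hab'⟩
    have hker : Ideal.span (s : Set (MvPolynomial (Fin n) ℝ ⧸ I)) ≤ RingHom.ker ev :=
      Ideal.span_le.mpr fun g hg => hsum g hg
    exact hb' (hker (hs ▸ hb'D))
end
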